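/- Assume V is finite-dimensional and let Θ be an alternating k-form on Ã (k ≥ 1). If Θ vanishes on all k-tuples of elements in the image of the canonical immersion, i.e., Θ(iA(a₁), …, iA(a_k)) = 0 for all a₁, …, a_k ∈ A, then Θ = 0. -/

import Mathlib

open Module

variable {V : Type*} [AddCommGroup V] [Module ℝ V]
variable {A : Type*} [AddTorsor V A]

/-- The canonical immersion of the affine space `A` into its bidual
`Ã = Module.Dual ℝ (A →ᵃ[ℝ] ℝ)`, given by `iA a φ = φ a`. -/
noncomputable def iA (a : A) : Module.Dual ℝ (A →ᵃ[ℝ] ℝ) where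
  toFun φ := φ a
  map_add' _ _ := rfl
  map_smul' _ _ := rfl

/-- The canonical linear immersion of the model vector space `V` into the bidual of `A`,
given by `iV v φ = φ.linear v`. -/
noncomputable def iV : V →ₗ[ℝ] Module.Dual ℝ (A →ᵃ[ℝ] ℝ) where
  toFun v :=
    { toFun := fun φ => φ.linear v
      map_add' := fun φ ψ => by simp
      map_smul' := fun c φ => by simp }
  map_add' v w := by ext φ; simp
  map_smul' c v := by ext φ; simp

/-- The projection `j` of the bidual onto `ℝ`: evaluation at the constant affine map `1`. -/
noncomputable def jmap : Module.Dual ℝ (A →ᵃ[ℝ] ℝ) →ₗ[ℝ] ℝ where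
  toFun z := z (AffineMap.const ℝ A (1 : ℝ))
  map_add' _ _ := rfl
  map_smul' _ _ := rfl

/-- If `V` is finite dimensional, an alternating `k`-form (`k ≥ 1`) on the bidual `Ã` which
vanishes on all tuples of elements in the image of the canonical immersion `iA` is zero. -/

theorem span_range_iA_top {V : Type*} [AddCommGroup V] [Module ℝ V] {A : Type*} [AddTorsor V A]
    [FiniteDimensional ℝ V] :
    ⊤ ≤ Submodule.span ℝ (Set.range (iA : A → Module.Dual ℝ (A →ᵃ[ℝ] ℝ))) := by
  intro z _
  obtain ⟨a₀⟩ : Nonempty A := inferInstance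
  -- the linear map sending a linear functional on V to an affine map on A
  set ψ : (V →ₗ[ℝ] ℝ) →ₗ[ℝ] (A →ᵃ[ℝ] ℝ) :=
    { toFun := fun f =>
        { toFun := fun a => f (a -ᵥ a₀)
          linear := f
          map_vadd' := fun p v => by simp [vadd_vsub_assoc, add_comm] }
      map_add' := fun f g => by ext a; simp
      map_smul' := fun c f => by ext a; simp }
  set c : ℝ := z (AffineMap.const ℝ A (1 : ℝ))
  set z' : Module.Dual ℝ (A →ᵃ[ℝ] ℝ) := z - c • iA a₀
  have hz'c : z' (AffineMap.const ℝ A (1 : ℝ)) = 0 := by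
    have h1 : iA a₀ (AffineMap.const ℝ A (1 : ℝ)) = 1 := rfl
    simp [z', h1, c]
  obtain ⟨v, hv⟩ := (Module.evalEquiv ℝ V).surjective (z' ∘ₗ ψ)
  have hv' : ∀ f : V →ₗ[ℝ] ℝ, z' (ψ f) = f v := by
    intro f
    have := congrArg (fun g => g f) hv
    simpa [Module.evalEquiv_apply, Module.Dual.eval] using this.symm
  have hz' : z' = iV v := by
    ext φ
    have hdecomp : φ = ψ φ.linear + (φ a₀) • (AffineMap.const ℝ A (1 : ℝ)) := by
      ext a
      have h2 := φ.map_vadd a₀ (a -ᵥ a₀)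
      rw [vsub_vadd] at h2
      have h3 : (ψ φ.linear + (φ a₀) • (AffineMap.const ℝ A (1 : ℝ))) a
          = φ.linear (a -ᵥ a₀) + φ a₀ * 1 := rfl
      rw [h3, h2, vadd_eq_add]; ring
    calc z' φ = z' (ψ φ.linear) + (φ a₀) * z' (AffineMap.const ℝ A (1 : ℝ)) := by
            conv_lhs => rw [hdecomp]
            simp
      _ = φ.linear v := by rw [hz'c, hv']; ring
      _ = iV v φ := rfl
  have hiV : (iV v : Module.Dual ℝ (A →ᵃ[ℝ] ℝ)) = iA (v +ᵥ a₀) - iA a₀ := by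
    ext φ
    have := φ.map_vadd a₀ v
    simp [iV, iA, this]
  have hz : z = c • iA a₀ + (iA (v +ᵥ a₀) - iA a₀) := by
    have : z = z' + c • iA a₀ := by simp [z']
    rw [this, hz', hiV]; abel
  rw [hz]
  refine Submodule.add_mem _ (Submodule.smul_mem _ _ ?_)
    (Submodule.sub_mem _ ?_ ?_) <;>
    exact Submodule.subset_span (Set.mem_range_self _)

theorem stmt13 {V : Type*} [AddCommGroup V] [Module ℝ V] {A : Type*} [AddTorsor V A]
    [FiniteDimensional ℝ V] {k : ℕ} (hk : 1 ≤ k)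
    (Θ : AlternatingMap ℝ (Module.Dual ℝ (A →ᵃ[ℝ] ℝ)) ℝ (Fin k))
    (h : ∀ a : Fin k → A, Θ (fun i => iA (a i)) = 0) :
    Θ = 0 := by
  have hspan : ⊤ ≤ Submodule.span ℝ (Set.range (iA : A → Module.Dual ℝ (A →ᵃ[ℝ] ℝ))) :=
    span_range_iA_top
  let b := Basis.ofSpan hspan
  have hb : ∀ i, ∃ a : A, b i = iA a := by
    intro i
    have : b i ∈ Set.range (iA : A → _) := Basis.ofSpan_subset hspan ⟨i, rfl⟩
    obtain ⟨a, ha⟩ := this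
    exact ⟨a, ha.symm⟩
  have : Θ.toMultilinearMap = (0 : AlternatingMap ℝ (Module.Dual ℝ (A →ᵃ[ℝ] ℝ)) ℝ (Fin k)).toMultilinearMap := by
    apply Basis.ext_multilinear (fun _ => b)
    intro idx
    choose a ha using fun i => hb (idx i)
    have := h a
    simp only [MultilinearMap.zero_apply, AlternatingMap.coe_multilinearMap,
      AlternatingMap.zero_apply]
    calc Θ (fun i => b (idx i)) = Θ (fun i => iA (a i)) := by
          exact congrArg _ (funext ha)
      _ = 0 := h a
  exact AlternatingMap.coe_multilinearMap_injective this
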